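/- Let y = X β̄ + ε with supp(β̄) ⊆ G_S for some S ⊆ {1,…,m}. Assume that for every group j, λ_j ≥ 4 ρ₊(G_j)^{1/2} ‖(X_{G_j}ᵀ X_{G_j})^{−1/2} X_{G_j}ᵀ ε‖₂ / √n. Then any minimizer β̂ of the group Lasso objective (1/n)‖Xβ − y‖₂² + Σ_{j=1}^m λ_j ‖β_{G_j}‖₂ satisfies Σ_{j ∉ S} λ_j ‖β̂_{G_j}‖₂ ≤ 3 Σ_{j ∈ S} λ_j ‖β̄_{G_j} − β̂_{G_j}‖₂. -/

import Mathlib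

open Matrix MeasureTheory ProbabilityTheory

noncomputable def norm2 {ι : Type*} [Fintype ι] (v : ι → ℝ) : ℝ :=
  Real.sqrt (∑ i, v i ^ 2)

open scoped Classical in
noncomputable def invSqrt {ι : Type*} [Fintype ι] [DecidableEq ι] (M : Matrix ι ι ℝ) :
    Matrix ι ι ℝ :=
  if h : M.PosSemidef then
    (h.1.eigenvectorUnitary.1 * diagonal ((RCLike.ofReal : ℝ → ℝ) ∘ (√·) ∘ h.1.eigenvalues) *
      (star h.1.eigenvectorUnitary : Matrix ι ι ℝ))⁻¹ else 0

def colSub {n p : ℕ} (X : Matrix (Fin n) (Fin p) ℝ) (F : Finset (Fin p)) :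
    Matrix (Fin n) {i : Fin p // i ∈ F} ℝ :=
  Matrix.of fun r c => X r c.1

noncomputable def groupProj {n p : ℕ} (X : Matrix (Fin n) (Fin p) ℝ) (F : Finset (Fin p))
    (v : Fin n → ℝ) : ℝ :=
  norm2 ((invSqrt ((colSub X F)ᵀ * colSub X F)) *ᵥ ((colSub X F)ᵀ *ᵥ v))

def restr {p : ℕ} (F : Finset (Fin p)) (β : Fin p → ℝ) : Fin p → ℝ :=
  fun i => if i ∈ F then β i else 0

/-- `G` is a partition of the index set into disjoint groups. -/
def IsPartition {p m : ℕ} (G : Fin m → Finset (Fin p)) : Prop :=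
  (∀ j₁ j₂, j₁ ≠ j₂ → Disjoint (G j₁) (G j₂)) ∧ Finset.univ.biUnion G = Finset.univ

/-- `β` is `(g, k)` strongly group-sparse. -/
def SGS {p m : ℕ} (G : Fin m → Finset (Fin p)) (g k : ℕ) (β : Fin p → ℝ) : Prop :=
  ∃ S : Finset (Fin m), S.card ≤ g ∧ (S.biUnion G).card ≤ k ∧
    ∀ i, β i ≠ 0 → i ∈ S.biUnion G

noncomputable def rhoMinusF {n p : ℕ} (X : Matrix (Fin n) (Fin p) ℝ) (F : Finset (Fin p)) : ℝ :=
  sInf {r : ℝ | ∃ β : Fin p → ℝ, β ≠ 0 ∧ (∀ i ∉ F, β i = 0) ∧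
    r = norm2 (X *ᵥ β) ^ 2 / (n * norm2 β ^ 2)}

noncomputable def rhoPlusF {n p : ℕ} (X : Matrix (Fin n) (Fin p) ℝ) (F : Finset (Fin p)) : ℝ :=
  sSup {r : ℝ | ∃ β : Fin p → ℝ, β ≠ 0 ∧ (∀ i ∉ F, β i = 0) ∧
    r = norm2 (X *ᵥ β) ^ 2 / (n * norm2 β ^ 2)}

noncomputable def rhoMinusN {n p m : ℕ} (X : Matrix (Fin n) (Fin p) ℝ)
    (G : Fin m → Finset (Fin p)) (s : ℕ) : ℝ :=
  sInf {r : ℝ | ∃ S : Finset (Fin m), (S.biUnion G).card ≤ s ∧ r = rhoMinusF X (S.biUnion G)}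

noncomputable def rhoPlusN {n p m : ℕ} (X : Matrix (Fin n) (Fin p) ℝ)
    (G : Fin m → Finset (Fin p)) (s : ℕ) : ℝ :=
  sSup {r : ℝ | ∃ S : Finset (Fin m), (S.biUnion G).card ≤ s ∧ r = rhoPlusF X (S.biUnion G)}

/-- The group Lasso objective. -/
noncomputable def glObj {n p m : ℕ} (X : Matrix (Fin n) (Fin p) ℝ)
    (G : Fin m → Finset (Fin p)) (lam : Fin m → ℝ) (y : Fin n → ℝ) (β : Fin p → ℝ) : ℝ :=
  (1 / (n : ℝ)) * norm2 (X *ᵥ β - y) ^ 2 + ∑ j, lam j * norm2 (restr (G j) β)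

section Helpers

variable {ι : Type*} [Fintype ι]

lemma norm2_nonneg (v : ι → ℝ) : 0 ≤ norm2 v := Real.sqrt_nonneg _

lemma norm2_sq (v : ι → ℝ) : norm2 v ^ 2 = ∑ i, v i ^ 2 :=
  Real.sq_sqrt (Finset.sum_nonneg fun _ _ => sq_nonneg _)

lemma norm2_zero : norm2 (0 : ι → ℝ) = 0 := by simp [norm2]

lemma norm2_neg (v : ι → ℝ) : norm2 (-v) = norm2 v := by simp [norm2]

lemma norm2_pos {v : ι → ℝ} (h : v ≠ 0) : 0 < norm2 v := by
  have hex : ∃ i, v i ≠ 0 := by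
    by_contra hc; push_neg at hc; exact h (funext hc)
  obtain ⟨i, hi⟩ := hex
  exact Real.sqrt_pos.2 <| Finset.sum_pos' (fun j _ => sq_nonneg _)
    ⟨i, Finset.mem_univ i, by positivity⟩

lemma dot_le_norm2 (v w : ι → ℝ) : ∑ i, v i * w i ≤ norm2 v * norm2 w := by
  have h := Finset.sum_mul_sq_le_sq_mul_sq Finset.univ v w
  calc ∑ i, v i * w i ≤ |∑ i, v i * w i| := le_abs_self _
    _ = Real.sqrt ((∑ i, v i * w i) ^ 2) := (Real.sqrt_sq_eq_abs _).symm
    _ ≤ Real.sqrt ((∑ i, v i ^ 2) * ∑ i, w i ^ 2) := Real.sqrt_le_sqrt h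
    _ = norm2 v * norm2 w := by
        rw [Real.sqrt_mul (Finset.sum_nonneg fun _ _ => sq_nonneg _)]; rfl

lemma norm2_add_le (v w : ι → ℝ) : norm2 (v + w) ≤ norm2 v + norm2 w := by
  have hvw := dot_le_norm2 v w
  have e2 := norm2_sq v; have e3 := norm2_sq w
  have hs : ∑ i, (v i + w i) ^ 2 ≤ (norm2 v + norm2 w) ^ 2 := by
    have e1 : ∑ i, (v i + w i) ^ 2
        = (∑ i, v i ^ 2) + 2 * (∑ i, v i * w i) + ∑ i, w i ^ 2 := by
      rw [Finset.mul_sum, ← Finset.sum_add_distrib, ← Finset.sum_add_distrib]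
      exact Finset.sum_congr rfl fun i _ => by ring
    nlinarith [norm2_nonneg v, norm2_nonneg w]
  calc norm2 (v + w) = Real.sqrt (∑ i, (v i + w i) ^ 2) := rfl
    _ ≤ Real.sqrt ((norm2 v + norm2 w) ^ 2) := Real.sqrt_le_sqrt hs
    _ = norm2 v + norm2 w := Real.sqrt_sq (add_nonneg (norm2_nonneg v) (norm2_nonneg w))

end Helpers

section Restr

variable {n p : ℕ}

/-- Restriction of a vector to the coordinates of a group. -/
def subv (F : Finset (Fin p)) (v : Fin p → ℝ) : {i : Fin p // i ∈ F} → ℝ := fun c => v c.1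

lemma mulVec_restr (X : Matrix (Fin n) (Fin p) ℝ) (F : Finset (Fin p)) (v : Fin p → ℝ) :
    X *ᵥ restr F v = colSub X F *ᵥ subv F v := by
  funext r
  simp only [mulVec, dotProduct, colSub, restr, subv, Matrix.of_apply]
  simp only [mul_ite, mul_zero]
  rw [Finset.sum_ite_mem, Finset.univ_inter,
    Finset.sum_subtype F (fun _ => Iff.rfl) (fun i => X r i * v i)]

lemma norm2_restr (F : Finset (Fin p)) (v : Fin p → ℝ) :
    norm2 (restr F v) = norm2 (subv F v) := by
  unfold norm2
  congr 1
  have h : ∀ i : Fin p, restr F v i ^ 2 = if i ∈ F then v i ^ 2 else 0 := by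
    intro i; simp only [restr]; split <;> simp
  simp only [h]
  rw [Finset.sum_ite_mem, Finset.univ_inter,
    Finset.sum_subtype F (fun _ => Iff.rfl) (fun i => v i ^ 2)]
  rfl

end Restr

section GroupBound

lemma norm2_sq_dot {ι : Type*} [Fintype ι] (v : ι → ℝ) : norm2 v ^ 2 = v ⬝ᵥ v := by
  rw [norm2_sq]; simp [dotProduct, sq]

lemma rhoPlusF_bound {n p : ℕ} (hn : 0 < n) (X : Matrix (Fin n) (Fin p) ℝ)
    (F : Finset (Fin p)) (v : Fin p → ℝ) (h0 : restr F v ≠ 0) :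
    norm2 (X *ᵥ restr F v) ^ 2 ≤ (n : ℝ) * rhoPlusF X F * norm2 (restr F v) ^ 2 ∧
      0 ≤ rhoPlusF X F := by
  have hnpos : (0 : ℝ) < n := by exact_mod_cast hn
  have hb : 0 < norm2 (restr F v) ^ 2 := pow_pos (norm2_pos h0) 2
  set C : ℝ := ∑ r, ∑ k, X r k ^ 2 with hC
  -- boundedness of the defining set
  have hbdd : BddAbove {r : ℝ | ∃ β : Fin p → ℝ, β ≠ 0 ∧ (∀ i ∉ F, β i = 0) ∧
      r = norm2 (X *ᵥ β) ^ 2 / (n * norm2 β ^ 2)} := by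
    refine ⟨C / n, ?_⟩
    rintro r ⟨β, hβ0, _, rfl⟩
    have hβb : 0 < norm2 β ^ 2 := pow_pos (norm2_pos hβ0) 2
    have h1 : norm2 (X *ᵥ β) ^ 2 ≤ C * norm2 β ^ 2 := by
      rw [norm2_sq, norm2_sq, hC, Finset.sum_mul]
      refine Finset.sum_le_sum fun r _ => ?_
      exact Finset.sum_mul_sq_le_sq_mul_sq Finset.univ (fun k => X r k) β
    calc norm2 (X *ᵥ β) ^ 2 / (n * norm2 β ^ 2)
        ≤ C * norm2 β ^ 2 / (n * norm2 β ^ 2) := by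
          exact (div_le_div_iff_of_pos_right (mul_pos hnpos hβb)).mpr h1
      _ = C / n := by
          rw [mul_comm (n : ℝ) (norm2 β ^ 2), mul_comm C (norm2 β ^ 2),
            mul_div_mul_left _ _ (ne_of_gt hβb)]
  have hmem : norm2 (X *ᵥ restr F v) ^ 2 / (n * norm2 (restr F v) ^ 2) ∈
      {r : ℝ | ∃ β : Fin p → ℝ, β ≠ 0 ∧ (∀ i ∉ F, β i = 0) ∧
        r = norm2 (X *ᵥ β) ^ 2 / (n * norm2 β ^ 2)} := by
    exact ⟨restr F v, h0, fun i hi => by simp [restr, hi], rfl⟩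
  have hle := le_csSup hbdd hmem
  have hr0 : 0 ≤ norm2 (X *ᵥ restr F v) ^ 2 / (n * norm2 (restr F v) ^ 2) := by positivity
  constructor
  · rw [div_le_iff₀ (by positivity)] at hle
    calc norm2 (X *ᵥ restr F v) ^ 2 ≤ rhoPlusF X F * ((n : ℝ) * norm2 (restr F v) ^ 2) := hle
      _ = (n : ℝ) * rhoPlusF X F * norm2 (restr F v) ^ 2 := by ring
  · exact le_trans hr0 hle

end GroupBound

section GB2

lemma group_bound {n p : ℕ} (hn : 0 < n) (X : Matrix (Fin n) (Fin p) ℝ) (F : Finset (Fin p))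
    (hpd : ((colSub X F)ᵀ * colSub X F).PosDef) (ε : Fin n → ℝ) (v : Fin p → ℝ) :
    ∑ r, (X *ᵥ restr F v) r * ε r ≤
      Real.sqrt n * Real.sqrt (rhoPlusF X F) * groupProj X F ε * norm2 (restr F v) := by
  classical
  set A := colSub X F with hA
  set M := Aᵀ * A with hM
  have hps : M.PosSemidef := hpd.posSemidef
  set U : Matrix F F ℝ := hps.1.eigenvectorUnitary.1 with hU
  set D : Matrix F F ℝ := diagonal ((RCLike.ofReal : ℝ → ℝ) ∘ (√·) ∘ hps.1.eigenvalues) with hD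
  set Q := U * D * (star hps.1.eigenvectorUnitary : Matrix F F ℝ) with hQ
  have hinv : invSqrt M = Q⁻¹ := by rw [invSqrt, dif_pos hps]
  have hQQ : Q * Q = M := by
    have hUU : (star hps.1.eigenvectorUnitary : Matrix F F ℝ) * U = 1 :=
      Unitary.coe_star_mul_self _
    have hDD : D * D = diagonal ((RCLike.ofReal : ℝ → ℝ) ∘ hps.1.eigenvalues) := by
      rw [hD, diagonal_mul_diagonal]
      congr 1; funext i
      simp [Real.mul_self_sqrt (hps.eigenvalues_nonneg i)]
    have hspec := hps.1.spectral_theorem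
    rw [Unitary.conjStarAlgAut_apply] at hspec
    calc Q * Q = U * (D * D) * (star hps.1.eigenvectorUnitary : Matrix F F ℝ) := by
          simp only [hQ, Matrix.mul_assoc]
          rw [← Matrix.mul_assoc _ U, hUU, Matrix.one_mul]
      _ = M := by rw [hDD]; exact hspec.symm
  have hdet : Q.det ≠ 0 := by
    intro h0
    have h2 : Q.det * Q.det = M.det := by rw [← Matrix.det_mul, hQQ]
    have h3 := hpd.det_pos
    rw [h0, mul_zero] at h2
    linarith
  have hQR : Q * Q⁻¹ = 1 := Matrix.mul_nonsing_inv _ (isUnit_iff_ne_zero.2 hdet)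
  have hsym : Qᵀ = Q := by
    have h : Qᴴ = Q := by
      simp [hQ, hD, hU, Matrix.conjTranspose_mul, Matrix.star_eq_conjTranspose, Matrix.mul_assoc]
    rwa [Matrix.conjTranspose_eq_transpose_of_trivial] at h
  by_cases h0 : restr F v = 0
  · rw [h0, norm2_zero, Matrix.mulVec_zero, mul_zero]
    simp
  · -- nonzero case
    set u := subv F v with hu
    obtain ⟨hrho, hrho0⟩ := rhoPlusF_bound hn X F v h0
    set w := Aᵀ *ᵥ ε with hw
    have e1 : ∑ r, (X *ᵥ restr F v) r * ε r = u ⬝ᵥ w := by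
      rw [show (∑ r, (X *ᵥ restr F v) r * ε r) = (X *ᵥ restr F v) ⬝ᵥ ε from rfl,
        mulVec_restr, ← hA, dotProduct_comm, hw, Matrix.mulVec_transpose,
        Matrix.dotProduct_mulVec]
      exact dotProduct_comm _ _
    have e3 : u ⬝ᵥ w = (Q *ᵥ u) ⬝ᵥ (Q⁻¹ *ᵥ w) := by
      calc u ⬝ᵥ w = u ⬝ᵥ (Qᵀ *ᵥ (Q⁻¹ *ᵥ w)) := by
            rw [hsym, Matrix.mulVec_mulVec, hQR, Matrix.one_mulVec]
        _ = (Q *ᵥ u) ⬝ᵥ (Q⁻¹ *ᵥ w) := by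
            rw [Matrix.dotProduct_mulVec, Matrix.vecMul_transpose]
    have e4 : (Q *ᵥ u) ⬝ᵥ (Q⁻¹ *ᵥ w) ≤ norm2 (Q *ᵥ u) * norm2 (Q⁻¹ *ᵥ w) :=
      dot_le_norm2 _ _
    have egp : norm2 (Q⁻¹ *ᵥ w) = groupProj X F ε := by
      rw [groupProj, ← hA, ← hM, hinv, hw]
    -- bound on norm2 (Q *ᵥ u)
    have e5 : norm2 (Q *ᵥ u) ^ 2 = norm2 (X *ᵥ restr F v) ^ 2 := by
      rw [norm2_sq_dot, norm2_sq_dot, mulVec_restr, ← hA]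
      calc (Q *ᵥ u) ⬝ᵥ (Q *ᵥ u) = u ⬝ᵥ (Qᵀ *ᵥ (Q *ᵥ u)) := by
            rw [Matrix.dotProduct_mulVec u, Matrix.vecMul_transpose]
        _ = u ⬝ᵥ (M *ᵥ u) := by rw [hsym, Matrix.mulVec_mulVec, hQQ]
        _ = u ⬝ᵥ (Aᵀ *ᵥ (A *ᵥ u)) := by rw [hM, ← Matrix.mulVec_mulVec]
        _ = (A *ᵥ u) ⬝ᵥ (A *ᵥ u) := by
            rw [Matrix.dotProduct_mulVec u, Matrix.vecMul_transpose]
    have e6 : norm2 (Q *ᵥ u) ≤ Real.sqrt n * Real.sqrt (rhoPlusF X F) * norm2 (restr F v) := by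
      have h1 : norm2 (Q *ᵥ u) ^ 2 ≤ (n : ℝ) * rhoPlusF X F * norm2 (restr F v) ^ 2 := by
        rw [e5]; exact hrho
      have h2 : norm2 (Q *ᵥ u) = Real.sqrt (norm2 (Q *ᵥ u) ^ 2) :=
        (Real.sqrt_sq (norm2_nonneg _)).symm
      rw [h2]
      calc Real.sqrt (norm2 (Q *ᵥ u) ^ 2)
          ≤ Real.sqrt ((n : ℝ) * rhoPlusF X F * norm2 (restr F v) ^ 2) := Real.sqrt_le_sqrt h1
        _ = Real.sqrt n * Real.sqrt (rhoPlusF X F) * norm2 (restr F v) := by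
            rw [Real.sqrt_mul (by positivity), Real.sqrt_mul (Nat.cast_nonneg n),
              Real.sqrt_sq (norm2_nonneg _)]
    calc ∑ r, (X *ᵥ restr F v) r * ε r = (Q *ᵥ u) ⬝ᵥ (Q⁻¹ *ᵥ w) := by rw [e1, e3]
      _ ≤ norm2 (Q *ᵥ u) * norm2 (Q⁻¹ *ᵥ w) := e4
      _ ≤ (Real.sqrt n * Real.sqrt (rhoPlusF X F) * norm2 (restr F v)) * norm2 (Q⁻¹ *ᵥ w) :=
          mul_le_mul_of_nonneg_right e6 (norm2_nonneg _)
      _ = Real.sqrt n * Real.sqrt (rhoPlusF X F) * groupProj X F ε * norm2 (restr F v) := by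
          rw [egp]; ring

end GB2

/-- Lemma 10: if `supp(β̄) ⊆ G_S` and for every group `j`,
`λ_j ≥ 4 ρ₊(G_j)^{1/2} ‖(X_{G_j}ᵀ X_{G_j})^{-1/2} X_{G_j}ᵀ ε‖₂/√n`, then any group Lasso
minimizer `β̂` satisfies `Σ_{j∉S} λ_j ‖β̂_{G_j}‖₂ ≤ 3 Σ_{j∈S} λ_j ‖β̄_{G_j} - β̂_{G_j}‖₂`. -/
theorem stmt_13 (n p m : ℕ) (hn : 0 < n)
    (X : Matrix (Fin n) (Fin p) ℝ) (G : Fin m → Finset (Fin p)) (hG : IsPartition G)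
    (hpd : ∀ j, ((colSub X (G j))ᵀ * colSub X (G j)).PosDef)
    (βbar : Fin p → ℝ) (S : Finset (Fin m)) (hsupp : ∀ i, βbar i ≠ 0 → i ∈ S.biUnion G)
    (ε y : Fin n → ℝ) (hy : y = X *ᵥ βbar + ε)
    (lam : Fin m → ℝ) (hlam : ∀ j, 0 < lam j)
    (hlamlb : ∀ j, 4 * Real.sqrt (rhoPlusF X (G j)) * groupProj X (G j) ε / Real.sqrt n ≤ lam j)
    (βhat : Fin p → ℝ) (hmin : ∀ β, glObj X G lam y βhat ≤ glObj X G lam y β) :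
    ∑ j ∈ Finset.univ \ S, lam j * norm2 (restr (G j) βhat) ≤
      3 * ∑ j ∈ S, lam j * norm2 (restr (G j) (βbar - βhat)) := by

  classical
  have hnpos : (0 : ℝ) < n := by exact_mod_cast hn
  set Δ : Fin p → ℝ := βhat - βbar with hΔ
  -- pointwise support facts
  have hbar0' : ∀ j ∉ S, ∀ i ∈ G j, βbar i = 0 := by
    intro j hj i hi
    by_contra hne
    obtain ⟨j', hj'S, hij'⟩ := Finset.mem_biUnion.1 (hsupp i hne)
    have hne' : j' ≠ j := fun h => hj (h ▸ hj'S)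
    exact (Finset.disjoint_left.1 (hG.1 j' j hne') hij') hi
  have hbar0 : ∀ j ∉ S, restr (G j) βbar = 0 := by
    intro j hj; funext i; simp only [restr, Pi.zero_apply]
    split_ifs with hi
    · exact hbar0' j hj i hi
    · rfl
  have hDrestr : ∀ j ∉ S, restr (G j) Δ = restr (G j) βhat := by
    intro j hj; funext i; simp only [restr]
    split_ifs with hi
    · have h1 := hbar0' j hj i hi
      simp [hΔ, Pi.sub_apply, h1]
    · rfl
  have hT : ∀ j, norm2 (restr (G j) Δ) = norm2 (restr (G j) (βbar - βhat)) := by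
    intro j
    have h1 : restr (G j) (βbar - βhat) = -(restr (G j) Δ) := by
      funext i; simp only [restr, hΔ, Pi.neg_apply, Pi.sub_apply]
      split_ifs <;> ring
    rw [h1, norm2_neg]
  have htri : ∀ j, norm2 (restr (G j) βbar) ≤
      norm2 (restr (G j) (βbar - βhat)) + norm2 (restr (G j) βhat) := by
    intro j
    have hdec : restr (G j) βbar = restr (G j) (βbar - βhat) + restr (G j) βhat := by
      funext i; simp only [restr, Pi.add_apply, Pi.sub_apply]
      split_ifs <;> ring
    rw [hdec]; exact norm2_add_le _ _
  -- basic inequality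
  have hbasic := hmin βbar
  simp only [glObj] at hbasic
  have hXbar : X *ᵥ βbar - y = -ε := by rw [hy]; abel
  have hXhat : X *ᵥ βhat - y = X *ᵥ Δ - ε := by
    rw [hy, hΔ, Matrix.mulVec_sub]; abel
  rw [hXbar, hXhat, norm2_neg] at hbasic
  set E := ∑ r, (X *ᵥ Δ) r * ε r with hE
  have hexp : norm2 (X *ᵥ Δ - ε) ^ 2 = norm2 (X *ᵥ Δ) ^ 2 - 2 * E + norm2 ε ^ 2 := by
    rw [norm2_sq, norm2_sq, norm2_sq, hE, Finset.mul_sum, ← Finset.sum_sub_distrib,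
      ← Finset.sum_add_distrib]
    exact Finset.sum_congr rfl fun r _ => by simp only [Pi.sub_apply]; ring
  have key1 : ∑ j, lam j * norm2 (restr (G j) βhat) ≤
      (2 / (n : ℝ)) * E + ∑ j, lam j * norm2 (restr (G j) βbar) := by
    have ha : 0 ≤ norm2 (X *ᵥ Δ) ^ 2 := sq_nonneg _
    have hrw : (1 / (n : ℝ)) * (norm2 (X *ᵥ Δ) ^ 2 - 2 * E + norm2 ε ^ 2) =
        (1 / (n : ℝ)) * norm2 (X *ᵥ Δ) ^ 2 - (2 / (n : ℝ)) * E
          + (1 / (n : ℝ)) * norm2 ε ^ 2 := by ring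
    rw [hexp, hrw] at hbasic
    have h1n : 0 ≤ (1 / (n : ℝ)) := by positivity
    linarith [mul_nonneg h1n ha]
  -- decomposition of E over groups
  have hsplit : ∀ v : Fin p → ℝ, ∑ j, restr (G j) v = v := by
    intro v; funext i
    have hi : i ∈ Finset.univ.biUnion G := by rw [hG.2]; exact Finset.mem_univ i
    obtain ⟨j₀, _, hj₀⟩ := Finset.mem_biUnion.1 hi
    rw [Finset.sum_apply]
    rw [Finset.sum_eq_single j₀]
    · simp [restr, hj₀]
    · intro j _ hne
      have hnotin : i ∉ G j := fun h => (Finset.disjoint_left.1 (hG.1 j j₀ hne) h) hj₀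
      simp [restr, hnotin]
    · intro h; exact absurd (Finset.mem_univ j₀) h
  have hE_split : E = ∑ j, ∑ r, (X *ᵥ restr (G j) Δ) r * ε r := by
    rw [hE]
    calc ∑ r, (X *ᵥ Δ) r * ε r
        = ∑ r, (∑ j, (X *ᵥ restr (G j) Δ) r) * ε r := by
          refine Finset.sum_congr rfl fun r _ => ?_
          congr 1
          calc (X *ᵥ Δ) r = (X *ᵥ (∑ j, restr (G j) Δ)) r := by rw [hsplit Δ]
            _ = ∑ j, (X *ᵥ restr (G j) Δ) r := by
                simp only [mulVec, dotProduct, Finset.sum_apply, Finset.mul_sum]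
                exact Finset.sum_comm
      _ = ∑ j, ∑ r, (X *ᵥ restr (G j) Δ) r * ε r := by
          simp only [Finset.sum_mul]
          exact Finset.sum_comm
  have key2 : (2 / (n : ℝ)) * E ≤ ∑ j, (lam j / 2) * norm2 (restr (G j) Δ) := by
    rw [hE_split, Finset.mul_sum]
    refine Finset.sum_le_sum fun j _ => ?_
    have hgb := group_bound hn X (G j) (hpd j) ε Δ
    have h2n : 0 ≤ 2 / (n : ℝ) := by positivity
    refine (mul_le_mul_of_nonneg_left hgb h2n).trans ?_
    have hspos : 0 < Real.sqrt (n : ℝ) := Real.sqrt_pos.2 hnpos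
    set s := Real.sqrt (n : ℝ) with hsdef
    have hs : s * s = (n : ℝ) := Real.mul_self_sqrt (Nat.cast_nonneg n)
    have heq : (2 / (n : ℝ)) * (s * Real.sqrt (rhoPlusF X (G j)) * groupProj X (G j) ε *
        norm2 (restr (G j) Δ)) =
        ((4 * Real.sqrt (rhoPlusF X (G j)) * groupProj X (G j) ε / s) / 2) *
          norm2 (restr (G j) Δ) := by
      rw [← hs]; field_simp; ring
    rw [heq]
    apply mul_le_mul_of_nonneg_right _ (norm2_nonneg _)
    linarith [hlamlb j]
  -- assemble
  set A1 := ∑ j ∈ Finset.univ \ S, lam j * norm2 (restr (G j) βhat) with hA1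
  set A2 := ∑ j ∈ S, lam j * norm2 (restr (G j) βhat) with hA2
  set C2 := ∑ j ∈ S, lam j * norm2 (restr (G j) (βbar - βhat)) with hC2
  have hQ1 : ∑ j, lam j * norm2 (restr (G j) βhat) = A1 + A2 :=
    (Finset.sum_sdiff (Finset.subset_univ S)).symm
  have hQ2 : ∑ j, lam j * norm2 (restr (G j) βbar) =
      ∑ j ∈ S, lam j * norm2 (restr (G j) βbar) := by
    rw [← Finset.sum_sdiff (Finset.subset_univ S)]
    have hz : ∑ j ∈ Finset.univ \ S, lam j * norm2 (restr (G j) βbar) = 0 :=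
      Finset.sum_eq_zero fun j hj => by
        rw [hbar0 j (Finset.mem_sdiff.1 hj).2, norm2_zero, mul_zero]
    rw [hz, zero_add]
  have hQ3 : ∑ j, (lam j / 2) * norm2 (restr (G j) Δ) = (1 / 2) * A1 + (1 / 2) * C2 := by
    rw [← Finset.sum_sdiff (Finset.subset_univ S)]
    congr 1
    · rw [hA1, Finset.mul_sum]
      refine Finset.sum_congr rfl fun j hj => ?_
      rw [hDrestr j (Finset.mem_sdiff.1 hj).2]; ring
    · rw [hC2, Finset.mul_sum]
      refine Finset.sum_congr rfl fun j _ => ?_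
      rw [hT j]; ring
  have hQ4 : ∑ j ∈ S, lam j * norm2 (restr (G j) βbar) ≤ C2 + A2 := by
    rw [hC2, hA2, ← Finset.sum_add_distrib]
    refine Finset.sum_le_sum fun j _ => ?_
    calc lam j * norm2 (restr (G j) βbar)
        ≤ lam j * (norm2 (restr (G j) (βbar - βhat)) + norm2 (restr (G j) βhat)) :=
          mul_le_mul_of_nonneg_left (htri j) (le_of_lt (hlam j))
      _ = _ := by ring
  rw [hQ1] at key1
  rw [hQ2] at key1
  rw [hQ3] at key2
  linarith [key1, key2, hQ4]
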